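/- arXiv:2012.01089 — 6 statements merged into one kernel-verified Lean document; each statement's English description precedes it below -/
import Mathlib

section
/- Let s > 0, ω > 0, K_x ≥ 0, K_y ≥ 0, and let x, v ∈ B_s^d with x ≠ 0, d_s(0, x) ≤ K_x and d_s(0, v) ≤ K_y. Let P be a real d×d matrix with Px ≠ 0 and ‖P‖_F ≤ K_y/ω. Then d_s(v, P^{⊗_s} x) ≤ K_y·(K_x/ω + 1). -/
open Real MeasureTheory

/-- Inverse hyperbolic tangent on `(-1, 1)`. -/
noncomputable def Real.artanhLog (x : ℝ) : ℝ := (1 / 2) * Real.log ((1 + x) / (1 - x))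

/-- Matrix-vector multiplication viewed as a map between Euclidean spaces. -/
noncomputable def mulVecE {d d' : ℕ} (P : Matrix (Fin d') (Fin d) ℝ)
    (x : EuclideanSpace ℝ (Fin d)) : EuclideanSpace ℝ (Fin d') :=
  (EuclideanSpace.equiv (Fin d') ℝ).symm (P.mulVec (EuclideanSpace.equiv (Fin d) ℝ x))

/-- Möbius matrix multiplication `P^{⊗_s} x` on the Poincaré ball of radius `s`.
When `P.mulVec x = 0` this evaluates to `0`, as required. -/
noncomputable def mobiusMat {d d' : ℕ} (s : ℝ) (P : Matrix (Fin d') (Fin d) ℝ)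
    (x : EuclideanSpace ℝ (Fin d)) : EuclideanSpace ℝ (Fin d') :=
  (s * Real.tanh ((‖mulVecE P x‖ / ‖x‖) * Real.artanhLog (‖x‖ / s)) / ‖mulVecE P x‖) • mulVecE P x

/-- Frobenius norm of a real matrix. -/
noncomputable def frobNorm {m n : ℕ} (P : Matrix (Fin m) (Fin n) ℝ) : ℝ :=
  Real.sqrt (∑ i, ∑ j, (P i j) ^ 2)

/-- Lorentz gamma factor `γ_x = 1/√(1 - ‖x‖²/s²)`. -/
noncomputable def lorentzGamma {d : ℕ} (s : ℝ) (x : EuclideanSpace ℝ (Fin d)) : ℝ :=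
  1 / Real.sqrt (1 - ‖x‖ ^ 2 / s ^ 2)

/-- Poincaré distance `d_s(x,y) = 2s·arsinh(γ_x γ_y ‖x - y‖ / s)`. -/
noncomputable def dPoin {d : ℕ} (s : ℝ) (x y : EuclideanSpace ℝ (Fin d)) : ℝ :=
  2 * s * Real.arsinh (lorentzGamma s x * lorentzGamma s y * ‖x - y‖ / s)

/-- Möbius addition on the Poincaré ball of radius `s`. -/
noncomputable def mobiusAdd {d : ℕ} (s : ℝ) (x y : EuclideanSpace ℝ (Fin d)) :
    EuclideanSpace ℝ (Fin d) :=
  ((1 + 2 / s ^ 2 * (inner ℝ x y : ℝ) + 1 / s ^ 2 * ‖y‖ ^ 2) /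
      (1 + 2 / s ^ 2 * (inner ℝ x y : ℝ) + 1 / s ^ 4 * ‖x‖ ^ 2 * ‖y‖ ^ 2)) • x +
    ((1 - 1 / s ^ 2 * ‖x‖ ^ 2) /
      (1 + 2 / s ^ 2 * (inner ℝ x y : ℝ) + 1 / s ^ 4 * ‖x‖ ^ 2 * ‖y‖ ^ 2)) • y

/-- Exponential map at the origin of the Poincaré ball of radius `s`. -/
noncomputable def expZero {d : ℕ} (s : ℝ) (v : EuclideanSpace ℝ (Fin d)) :
    EuclideanSpace ℝ (Fin d) :=
  (s * Real.tanh (‖v‖ / s) / ‖v‖) • v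

/-- Logarithmic map at the origin of the Poincaré ball of radius `s`. -/
noncomputable def logZero {d : ℕ} (s : ℝ) (y : EuclideanSpace ℝ (Fin d)) :
    EuclideanSpace ℝ (Fin d) :=
  (s * Real.artanhLog (‖y‖ / s) / ‖y‖) • y


lemma my_artanh_tanh (θ : ℝ) : Real.artanhLog (Real.tanh θ) = θ := by
  have hc : 0 < Real.cosh θ := Real.cosh_pos θ
  have h1 : 1 + Real.tanh θ = Real.exp θ / Real.cosh θ := by
    rw [Real.tanh_eq_sinh_div_cosh, ← Real.cosh_add_sinh]; field_simp
  have h2 : 1 - Real.tanh θ = Real.exp (-θ) / Real.cosh θ := by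
    rw [Real.tanh_eq_sinh_div_cosh, ← Real.cosh_sub_sinh]; field_simp
  unfold Real.artanhLog
  rw [h1, h2, div_div_div_cancel_right₀ (ne_of_gt hc), ← Real.exp_sub, Real.log_exp]
  ring

lemma my_exp_artanh {t : ℝ} (h0 : -1 < t) (h1 : t < 1) :
    Real.exp (Real.artanhLog t) = Real.sqrt ((1 + t) / (1 - t)) := by
  have hq : 0 < (1 + t) / (1 - t) := div_pos (by linarith) (by linarith)
  unfold Real.artanhLog
  rw [show (1:ℝ)/2 * Real.log ((1 + t) / (1 - t)) = Real.log ((1+t)/(1-t)) / 2 by ring,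
    ← Real.log_sqrt hq.le, Real.exp_log (Real.sqrt_pos.mpr hq)]

lemma my_tanh_artanh {t : ℝ} (h0 : -1 < t) (h1 : t < 1) :
    Real.tanh (Real.artanhLog t) = t := by
  have e := my_exp_artanh h0 h1
  have hq : 0 < (1 + t) / (1 - t) := div_pos (by linarith) (by linarith)
  have hsq : Real.sqrt ((1 + t) / (1 - t)) ^ 2 = (1+t)/(1-t) := Real.sq_sqrt hq.le
  have hsp : 0 < Real.sqrt ((1 + t) / (1 - t)) := Real.sqrt_pos.mpr hq
  rw [Real.tanh_eq_sinh_div_cosh, Real.sinh_eq, Real.cosh_eq, Real.exp_neg, e]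
  set q := Real.sqrt ((1 + t) / (1 - t))
  rw [div_div_div_cancel_right₀ (by positivity : (2:ℝ) ≠ 0)]
  have h1t : (1:ℝ) - t ≠ 0 := by linarith
  field_simp at hsq ⊢
  nlinarith [hsq, hsp]

lemma my_artanh_nonneg {t : ℝ} (h0 : 0 ≤ t) (h1 : t < 1) : 0 ≤ Real.artanhLog t := by
  unfold Real.artanhLog
  have : (1:ℝ) ≤ (1 + t) / (1 - t) := by
    rw [le_div_iff₀ (by linarith)]; linarith
  have := Real.log_nonneg this
  linarith

lemma my_cosh_artanh {t : ℝ} (h0 : 0 ≤ t) (h1 : t < 1) :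
    Real.cosh (Real.artanhLog t) = 1 / Real.sqrt (1 - t ^ 2) := by
  have ht : Real.tanh (Real.artanhLog t) = t := my_tanh_artanh (by linarith) h1
  set a := Real.artanhLog t
  have hc : 0 < Real.cosh a := Real.cosh_pos a
  have hid : Real.cosh a ^ 2 - Real.sinh a ^ 2 = 1 := Real.cosh_sq_sub_sinh_sq a
  have hsinh : Real.sinh a = t * Real.cosh a := by
    rw [Real.tanh_eq_sinh_div_cosh] at ht
    field_simp at ht; linarith [ht]
  have hs2 : Real.sinh a ^ 2 = t ^ 2 * Real.cosh a ^ 2 := by rw [hsinh]; ring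
  have hc2 : Real.cosh a ^ 2 * (1 - t ^ 2) = 1 := by linear_combination hid + hs2
  have h1t : (0:ℝ) < 1 - t ^ 2 := by nlinarith
  have : Real.cosh a = Real.sqrt (1 / (1 - t ^ 2)) := by
    rw [← Real.sqrt_sq hc.le]
    congr 1
    field_simp at hc2 ⊢
    linarith
  rw [this, one_div, one_div, Real.sqrt_inv]

lemma my_sinh_artanh {t : ℝ} (h0 : 0 ≤ t) (h1 : t < 1) :
    Real.sinh (Real.artanhLog t) = t / Real.sqrt (1 - t ^ 2) := by
  have ht : Real.tanh (Real.artanhLog t) = t := my_tanh_artanh (by linarith) h1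
  have hc := my_cosh_artanh h0 h1
  have hcp : 0 < Real.cosh (Real.artanhLog t) := Real.cosh_pos _
  rw [Real.tanh_eq_sinh_div_cosh] at ht
  have : Real.sinh (Real.artanhLog t) = t * Real.cosh (Real.artanhLog t) := by
    field_simp at ht; linarith
  rw [this, hc]; ring

lemma my_gamma_eq {d : ℕ} (s : ℝ) (hs : 0 < s) (v : EuclideanSpace ℝ (Fin d)) (hv : ‖v‖ < s) :
    lorentzGamma s v = Real.cosh (Real.artanhLog (‖v‖ / s)) := by
  rw [my_cosh_artanh (div_nonneg (norm_nonneg _) hs.le) ((div_lt_one hs).2 hv),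
    lorentzGamma, div_pow]

lemma my_gamma_sinh {d : ℕ} (s : ℝ) (hs : 0 < s) (v : EuclideanSpace ℝ (Fin d)) (hv : ‖v‖ < s) :
    lorentzGamma s v * (‖v‖ / s) = Real.sinh (Real.artanhLog (‖v‖ / s)) := by
  rw [my_sinh_artanh (div_nonneg (norm_nonneg _) hs.le) ((div_lt_one hs).2 hv),
    lorentzGamma, div_pow]
  ring

lemma my_dPoin_zero {d : ℕ} (s : ℝ) (hs : 0 < s) (v : EuclideanSpace ℝ (Fin d)) (hv : ‖v‖ < s) :
    dPoin s 0 v = 2 * s * Real.artanhLog (‖v‖ / s) := by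
  unfold dPoin
  have h0 : lorentzGamma s (0 : EuclideanSpace ℝ (Fin d)) = 1 := by
    simp [lorentzGamma]
  rw [h0, zero_sub, norm_neg, one_mul, mul_div_assoc, my_gamma_sinh s hs v hv,
    Real.arsinh_sinh]

lemma my_norm_mulVecE_le {d d' : ℕ} (P : Matrix (Fin d') (Fin d) ℝ)
    (x : EuclideanSpace ℝ (Fin d)) : ‖mulVecE P x‖ ≤ frobNorm P * ‖x‖ := by
  have hx2 : ‖x‖ = Real.sqrt (∑ j, (x j) ^ 2) := by
    rw [EuclideanSpace.norm_eq]
    congr 1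
    exact Finset.sum_congr rfl fun j _ => by rw [Real.norm_eq_abs, sq_abs]
  have hy : ‖mulVecE P x‖ = Real.sqrt (∑ i, (∑ j, P i j * x j) ^ 2) := by
    rw [EuclideanSpace.norm_eq]
    congr 1
    refine Finset.sum_congr rfl fun i _ => ?_
    rw [Real.norm_eq_abs, sq_abs]
    have : mulVecE P x i = ∑ j, P i j * x j := by
      simp [mulVecE, Matrix.mulVec, dotProduct]
    rw [this]
  rw [hy, hx2, frobNorm, ← Real.sqrt_mul (by positivity)]
  apply Real.sqrt_le_sqrt
  rw [Finset.sum_mul]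
  exact Finset.sum_le_sum fun i _ => Finset.sum_mul_sq_le_sq_mul_sq _ _ _


/-- The hyperbolic loss is bounded: `d_s(v, P^{⊗_s} x) ≤ K_y·(K_x/ω + 1)`. -/
theorem stmt4 {d : ℕ} (s ω Kx Ky : ℝ) (hs : 0 < s) (hω : 0 < ω) (hKx : 0 ≤ Kx) (hKy : 0 ≤ Ky)
    (x v : EuclideanSpace ℝ (Fin d)) (hx0 : x ≠ 0) (hxball : ‖x‖ < s) (hvball : ‖v‖ < s)
    (hdx : dPoin s 0 x ≤ Kx) (hdv : dPoin s 0 v ≤ Ky)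
    (P : Matrix (Fin d) (Fin d) ℝ) (hPx : mulVecE P x ≠ 0) (hPF : frobNorm P ≤ Ky / ω) :
    dPoin s v (mobiusMat s P x) ≤ Ky * (Kx / ω + 1) := by
  have hxn : (0:ℝ) < ‖x‖ := norm_pos_iff.mpr hx0
  have hyn : (0:ℝ) < ‖mulVecE P x‖ := norm_pos_iff.mpr hPx
  have ht0 : 0 ≤ ‖x‖ / s := div_nonneg (norm_nonneg _) hs.le
  have ht1 : ‖x‖ / s < 1 := (div_lt_one hs).mpr hxball
  have hu0 : 0 ≤ ‖v‖ / s := div_nonneg (norm_nonneg _) hs.le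
  have hu1 : ‖v‖ / s < 1 := (div_lt_one hs).mpr hvball
  have hat0 : 0 ≤ Real.artanhLog (‖x‖ / s) := my_artanh_nonneg ht0 ht1
  have hr0 : 0 ≤ ‖mulVecE P x‖ / ‖x‖ := div_nonneg (norm_nonneg _) (norm_nonneg _)
  set θ : ℝ := (‖mulVecE P x‖ / ‖x‖) * Real.artanhLog (‖x‖ / s) with hθdef
  have hθ0 : 0 ≤ θ := mul_nonneg hr0 hat0
  have htanh0 : 0 ≤ Real.tanh θ := by
    rw [Real.tanh_eq_sinh_div_cosh]
    have hsn : 0 ≤ Real.sinh θ := by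
      have := Real.sinh_le_sinh.mpr hθ0
      simpa using this
    exact div_nonneg hsn (Real.cosh_pos θ).le
  have htanh1 : Real.tanh θ < 1 := by
    rw [Real.tanh_eq_sinh_div_cosh, div_lt_one (Real.cosh_pos θ)]
    have := Real.cosh_sub_sinh θ
    have := Real.exp_pos (-θ)
    linarith
  set w := mobiusMat s P x with hwdef
  have hwnorm : ‖w‖ = s * Real.tanh θ := by
    rw [hwdef, mobiusMat, norm_smul, Real.norm_eq_abs, ← hθdef,
      abs_of_nonneg (div_nonneg (mul_nonneg hs.le htanh0) (norm_nonneg _)),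
      div_mul_cancel₀ _ (ne_of_gt hyn)]
  have hwball : ‖w‖ < s := by
    rw [hwnorm]; nlinarith
  have hm : ‖w‖ / s = Real.tanh θ := by
    rw [hwnorm]; field_simp
  have hmart : Real.artanhLog (‖w‖ / s) = θ := by rw [hm, my_artanh_tanh]
  -- triangle-through-zero bound
  have hA := my_gamma_eq s hs v hvball
  have hB := my_gamma_eq s hs w hwball
  have hAs := my_gamma_sinh s hs v hvball
  have hBs := my_gamma_sinh s hs w hwball
  set A := Real.artanhLog (‖v‖ / s) with hAdef
  have key : dPoin s v w ≤ 2 * s * (A + θ) := by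
    unfold dPoin
    have h1 : lorentzGamma s v * lorentzGamma s w * ‖v - w‖ / s
        ≤ Real.sinh (A + θ) := by
      have hγv : 0 ≤ lorentzGamma s v := by rw [hA]; exact (Real.cosh_pos _).le
      have hγw : 0 ≤ lorentzGamma s w := by rw [hB]; exact (Real.cosh_pos _).le
      have hsub : ‖v - w‖ / s ≤ ‖v‖ / s + ‖w‖ / s := by
        rw [← add_div]
        gcongr
        exact norm_sub_le v w
      calc lorentzGamma s v * lorentzGamma s w * ‖v - w‖ / s
          = lorentzGamma s v * lorentzGamma s w * (‖v - w‖ / s) := by ring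
        _ ≤ lorentzGamma s v * lorentzGamma s w * (‖v‖ / s + ‖w‖ / s) := by
            apply mul_le_mul_of_nonneg_left hsub (mul_nonneg hγv hγw)
        _ = (lorentzGamma s v * (‖v‖ / s)) * lorentzGamma s w
            + lorentzGamma s v * (lorentzGamma s w * (‖w‖ / s)) := by ring
        _ = Real.sinh A * Real.cosh (Real.artanhLog (‖w‖ / s))
            + Real.cosh A * Real.sinh (Real.artanhLog (‖w‖ / s)) := by
            rw [hAs, hBs, hA, hB]
        _ = Real.sinh (A + θ) := by rw [hmart, ← Real.sinh_add]
    have h2 : Real.arsinh (lorentzGamma s v * lorentzGamma s w * ‖v - w‖ / s)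
        ≤ A + θ := by
      calc Real.arsinh (lorentzGamma s v * lorentzGamma s w * ‖v - w‖ / s)
          ≤ Real.arsinh (Real.sinh (A + θ)) := Real.arsinh_le_arsinh.mpr h1
        _ = A + θ := Real.arsinh_sinh _
    have h2s : (0:ℝ) ≤ 2 * s := by linarith
    exact mul_le_mul_of_nonneg_left h2 h2s
  -- bounds on the pieces
  have hdvA : 2 * s * A ≤ Ky := by rw [← my_dPoin_zero s hs v hvball]; exact hdv
  have hdxT : 2 * s * Real.artanhLog (‖x‖ / s) ≤ Kx := by
    rw [← my_dPoin_zero s hs x hxball]; exact hdx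
  have hrle : ‖mulVecE P x‖ / ‖x‖ ≤ Ky / ω := by
    rw [div_le_iff₀ hxn]
    calc ‖mulVecE P x‖ ≤ frobNorm P * ‖x‖ := my_norm_mulVecE_le P x
      _ ≤ (Ky / ω) * ‖x‖ := mul_le_mul_of_nonneg_right hPF (norm_nonneg _)
  have hθb : 2 * s * θ ≤ (Ky / ω) * Kx := by
    have : 2 * s * θ = (‖mulVecE P x‖ / ‖x‖) * (2 * s * Real.artanhLog (‖x‖ / s)) := by
      rw [hθdef]; ring
    rw [this]
    apply mul_le_mul hrle hdxT (by positivity) (div_nonneg hKy hω.le)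
  have hexp : Ky * (Kx / ω + 1) = Ky + (Ky / ω) * Kx := by ring
  rw [hexp]
  linarith [key, hdvA, hθb]
end

section
/- Let s > 0, C_x > 0, L > 0, let P and Q be real d×d matrices, and let x ∈ ℝ^d with 0 < ‖x‖ ≤ C_x and ‖x‖ < s, Px ≠ 0, Qx ≠ 0, 1/‖Px‖ ≤ L and 1/‖Qx‖ ≤ L. Then ‖P^{⊗_s} x − Q^{⊗_s} x‖ ≤ 2sL·C_x·‖P − Q‖_F. -/
open Real MeasureTheory

/-! ### Auxiliary lemmas -/

private lemma sinh_le_mul_cosh' {t : ℝ} (h : 0 ≤ t) : Real.sinh t ≤ t * Real.cosh t := by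
  have hd : ∀ y : ℝ, HasDerivAt (fun z : ℝ => z * Real.cosh z - Real.sinh z)
      (y * Real.sinh y) y := by
    intro y
    have h1 : HasDerivAt (fun z : ℝ => z * Real.cosh z)
        (1 * Real.cosh y + y * Real.sinh y) y :=
      (hasDerivAt_id y).mul (Real.hasDerivAt_cosh y)
    have h2 := h1.sub (Real.hasDerivAt_sinh y)
    have he : 1 * Real.cosh y + y * Real.sinh y - Real.cosh y = y * Real.sinh y := by ring
    rw [he] at h2
    exact h2
  have key : MonotoneOn (fun z : ℝ => z * Real.cosh z - Real.sinh z) (Set.Ici 0) := by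
    apply monotoneOn_of_deriv_nonneg (convex_Ici 0)
    · exact ((continuous_id.mul Real.continuous_cosh).sub Real.continuous_sinh).continuousOn
    · intro y _; exact (hd y).differentiableAt.differentiableWithinAt
    · intro y hy
      rw [interior_Ici] at hy
      rw [(hd y).deriv]
      exact mul_nonneg hy.le (Real.sinh_nonneg_iff.2 hy.le)
  have := key Set.self_mem_Ici h h
  simpa using this

private lemma lt_cosh' {t : ℝ} (h : 0 ≤ t) : t < Real.cosh t := by
  have h1 : t ≤ Real.sinh t := Real.self_le_sinh_iff.2 h
  have h2 : Real.sinh t < Real.cosh t := by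
    have := Real.cosh_sub_sinh t
    nlinarith [Real.exp_pos (-t)]
  linarith

private lemma tanh_sub_eq' (a b : ℝ) : Real.tanh a - Real.tanh b =
    Real.sinh (a - b) / (Real.cosh a * Real.cosh b) := by
  rw [Real.tanh_eq_sinh_div_cosh, Real.tanh_eq_sinh_div_cosh, Real.sinh_sub]
  field_simp

private lemma tanh_diff_le' {c L a b : ℝ} (hc : 0 ≤ c) (hL : 0 < L)
    (hb : 1 / L ≤ b) (hba : b ≤ a) :
    Real.tanh (c * a) - Real.tanh (c * b) ≤ L * (a - b) := by
  have hb0 : 0 < b := lt_of_lt_of_le (by positivity) hb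
  have ha0 : 0 < a := lt_of_lt_of_le hb0 hba
  have hcb : (0:ℝ) ≤ c * b := by positivity
  have hca : (0:ℝ) ≤ c * a := by positivity
  have hD : (0:ℝ) ≤ c * (a - b) := by nlinarith
  rw [tanh_sub_eq']
  have e : c * a - c * b = c * (a - b) := by ring
  rw [e]
  have h1 : Real.sinh (c * (a - b)) ≤ c * (a - b) * Real.cosh (c * (a - b)) :=
    sinh_le_mul_cosh' hD
  have h2 : Real.cosh (c * (a - b)) ≤ Real.cosh (c * a) := by
    rw [Real.cosh_le_cosh]
    rw [abs_of_nonneg hD, abs_of_nonneg hca]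
    nlinarith
  have hcoa := Real.cosh_pos (x := c * a)
  have hcob := Real.cosh_pos (x := c * b)
  have h3 : c ≤ L * Real.cosh (c * b) := by
    have h4 : c / L ≤ c * b := by
      rw [div_le_iff₀ hL] at hb ⊢ <;> nlinarith
    have h5 : c / L < Real.cosh (c / L) := lt_cosh' (by positivity)
    have h6 : Real.cosh (c / L) ≤ Real.cosh (c * b) := by
      rw [Real.cosh_le_cosh, abs_of_nonneg (by positivity), abs_of_nonneg hcb]
      exact h4
    rw [div_lt_iff₀ hL] at h5
    nlinarith
  rw [div_le_iff₀ (by positivity)]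
  nlinarith [mul_nonneg hD (le_of_lt hcob), mul_le_mul_of_nonneg_left h2 hD,
    mul_nonneg (sub_nonneg.2 hba) hcoa.le,
    mul_le_mul_of_nonneg_right h3 (mul_nonneg (sub_nonneg.2 hba) hcob.le)]

private lemma tanh_abs_diff' {c L a b : ℝ} (hc : 0 ≤ c) (hL : 0 < L)
    (ha : 1 / L ≤ a) (hb : 1 / L ≤ b) :
    |Real.tanh (c * a) - Real.tanh (c * b)| ≤ L * |a - b| := by
  have hb0 : 0 < b := lt_of_lt_of_le (by positivity) hb
  have ha0 : 0 < a := lt_of_lt_of_le (by positivity) ha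
  rcases le_total b a with h | h
  · have h1 := tanh_diff_le' hc hL hb h
    have h2 : Real.tanh (c * b) - Real.tanh (c * a) ≤ 0 := by
      rw [tanh_sub_eq']
      apply div_nonpos_of_nonpos_of_nonneg
      · exact Real.sinh_nonpos_iff.2 (by nlinarith)
      · exact (mul_pos (Real.cosh_pos _) (Real.cosh_pos _)).le
    rw [abs_of_nonneg (by linarith), abs_of_nonneg (by linarith : (0:ℝ) ≤ a - b)]
    exact h1
  · have h1 := tanh_diff_le' hc hL ha h
    have h2 : Real.tanh (c * a) - Real.tanh (c * b) ≤ 0 := by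
      rw [tanh_sub_eq']
      apply div_nonpos_of_nonpos_of_nonneg
      · exact Real.sinh_nonpos_iff.2 (by nlinarith)
      · exact (mul_pos (Real.cosh_pos _) (Real.cosh_pos _)).le
    rw [abs_of_nonpos (by linarith), abs_of_nonpos (by linarith : a - b ≤ (0:ℝ))]
    linarith [h1]

private lemma unit_sub_le' {E : Type*} [NormedAddCommGroup E] [InnerProductSpace ℝ E]
    {u v : E} (hu : u ≠ 0) (hv : v ≠ 0) {L : ℝ}
    (hLu : 1 / ‖u‖ ≤ L) (hLv : 1 / ‖v‖ ≤ L) :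
    ‖(‖u‖)⁻¹ • u - (‖v‖)⁻¹ • v‖ ≤ L * ‖u - v‖ := by
  have ha0 : 0 < ‖u‖ := norm_pos_iff.2 hu
  have hb0 : 0 < ‖v‖ := norm_pos_iff.2 hv
  have hL0 : 0 < L := lt_of_lt_of_le (by positivity) hLu
  have haL : 1 ≤ ‖u‖ * L := by rw [div_le_iff₀ ha0] at hLu; linarith [hLu]
  have hbL : 1 ≤ ‖v‖ * L := by rw [div_le_iff₀ hb0] at hLv; linarith [hLv]
  have hcs : (inner ℝ u v : ℝ) ≤ ‖u‖ * ‖v‖ := real_inner_le_norm u v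
  have e1 : (‖u‖)⁻¹ * ‖u‖ = 1 := inv_mul_cancel₀ ha0.ne'
  have e2 : (‖v‖)⁻¹ * ‖v‖ = 1 := inv_mul_cancel₀ hb0.ne'
  have expand2 : ‖u - v‖ ^ 2 = ‖u‖ ^ 2 - 2 * (inner ℝ u v : ℝ) + ‖v‖ ^ 2 :=
    norm_sub_sq_real u v
  have expand1 : ‖(‖u‖)⁻¹ • u - (‖v‖)⁻¹ • v‖ ^ 2
      = 2 - 2 * ((‖u‖)⁻¹ * ((‖v‖)⁻¹ * (inner ℝ u v : ℝ))) := by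
    rw [norm_sub_sq_real, real_inner_smul_left, real_inner_smul_right,
      norm_smul, norm_smul, norm_inv, norm_norm, norm_inv, norm_norm, e1, e2]
    ring
  have key : ‖(‖u‖)⁻¹ • u - (‖v‖)⁻¹ • v‖ ^ 2 * (‖u‖ * ‖v‖)
      ≤ (L * ‖u - v‖) ^ 2 * (‖u‖ * ‖v‖) := by
    rw [expand1, mul_pow, expand2]
    have lhs_eq : (2 - 2 * ((‖u‖)⁻¹ * ((‖v‖)⁻¹ * (inner ℝ u v : ℝ)))) * (‖u‖ * ‖v‖)
        = 2 * (‖u‖ * ‖v‖) - 2 * (inner ℝ u v : ℝ) := by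
      field_simp
    rw [lhs_eq]
    have hX : (0:ℝ) ≤ ‖u‖ ^ 2 - 2 * (inner ℝ u v : ℝ) + ‖v‖ ^ 2 := by
      rw [← expand2]; positivity
    have hab1 : 1 ≤ (‖u‖ * L) * (‖v‖ * L) := by nlinarith
    nlinarith [mul_nonneg (sub_nonneg.2 hab1) hX, sq_nonneg (‖u‖ - ‖v‖)]
  have hsq : ‖(‖u‖)⁻¹ • u - (‖v‖)⁻¹ • v‖ ^ 2 ≤ (L * ‖u - v‖) ^ 2 :=
    le_of_mul_le_mul_right key (by positivity)
  have hpos : 0 ≤ L * ‖u - v‖ := by positivity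
  nlinarith [norm_nonneg ((‖u‖)⁻¹ • u - (‖v‖)⁻¹ • v), hsq, hpos]

private lemma mulVecE_apply' {d : ℕ} (M : Matrix (Fin d) (Fin d) ℝ)
    (x : EuclideanSpace ℝ (Fin d)) (i : Fin d) :
    mulVecE M x i = ∑ j, M i j * x j := by
  simp [mulVecE, Matrix.mulVec, dotProduct]

private lemma mulVecE_norm_le' {d : ℕ} (M : Matrix (Fin d) (Fin d) ℝ)
    (x : EuclideanSpace ℝ (Fin d)) : ‖mulVecE M x‖ ≤ frobNorm M * ‖x‖ := by
  have hx : ‖x‖ = Real.sqrt (∑ j, (x j) ^ 2) := by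
    rw [EuclideanSpace.norm_eq]
    simp only [Real.norm_eq_abs, sq_abs]
  have hM : ‖mulVecE M x‖ = Real.sqrt (∑ i, (∑ j, M i j * x j) ^ 2) := by
    rw [EuclideanSpace.norm_eq]
    simp only [mulVecE_apply', Real.norm_eq_abs, sq_abs]
  rw [hx, hM, frobNorm, ← Real.sqrt_mul (by positivity)]
  apply Real.sqrt_le_sqrt
  rw [Finset.sum_mul]
  apply Finset.sum_le_sum
  intro i _
  exact Finset.sum_mul_sq_le_sq_mul_sq _ _ _

private lemma mulVecE_sub' {d : ℕ} (P Q : Matrix (Fin d) (Fin d) ℝ)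
    (x : EuclideanSpace ℝ (Fin d)) :
    mulVecE P x - mulVecE Q x = mulVecE (P - Q) x := by
  simp [mulVecE, Matrix.sub_mulVec]

private lemma mobiusMat_eq' {d : ℕ} (s : ℝ) (P : Matrix (Fin d) (Fin d) ℝ)
    (x : EuclideanSpace ℝ (Fin d)) (hx : ‖x‖ ≠ 0) :
    mobiusMat s P x = (s * Real.tanh ((Real.artanhLog (‖x‖ / s) / ‖x‖) * ‖mulVecE P x‖)) •
      ((‖mulVecE P x‖)⁻¹ • mulVecE P x) := by
  rw [mobiusMat, smul_smul]
  have harg : ‖mulVecE P x‖ / ‖x‖ * Real.artanhLog (‖x‖ / s)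
      = Real.artanhLog (‖x‖ / s) / ‖x‖ * ‖mulVecE P x‖ := by ring
  rw [harg, div_eq_mul_inv]


/-- Lipschitz-type bound: `‖P^{⊗_s} x − Q^{⊗_s} x‖ ≤ 2sL·C_x·‖P − Q‖_F`. -/
theorem stmt7 {d : ℕ} (s Cx L : ℝ) (hs : 0 < s) (hCx : 0 < Cx) (hL : 0 < L)
    (P Q : Matrix (Fin d) (Fin d) ℝ) (x : EuclideanSpace ℝ (Fin d))
    (hx0 : 0 < ‖x‖) (hxC : ‖x‖ ≤ Cx) (hxs : ‖x‖ < s)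
    (hPx : mulVecE P x ≠ 0) (hQx : mulVecE Q x ≠ 0)
    (hPL : 1 / ‖mulVecE P x‖ ≤ L) (hQL : 1 / ‖mulVecE Q x‖ ≤ L) :
    ‖mobiusMat s P x - mobiusMat s Q x‖ ≤ 2 * s * L * Cx * frobNorm (P - Q) := by
  set u := mulVecE P x with hu_def
  set v := mulVecE Q x with hv_def
  have ha0 : 0 < ‖u‖ := norm_pos_iff.2 hPx
  have hb0 : 0 < ‖v‖ := norm_pos_iff.2 hQx
  have haL : 1 / L ≤ ‖u‖ := by
    rw [div_le_iff₀ hL]; rw [div_le_iff₀ ha0] at hPL; linarith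
  have hbL : 1 / L ≤ ‖v‖ := by
    rw [div_le_iff₀ hL]; rw [div_le_iff₀ hb0] at hQL; linarith
  set c := Real.artanhLog (‖x‖ / s) / ‖x‖ with hc_def
  have hr0 : 0 < ‖x‖ / s := by positivity
  have hr1 : ‖x‖ / s < 1 := (div_lt_one hs).2 hxs
  have hA : 0 ≤ Real.artanhLog (‖x‖ / s) := by
    rw [Real.artanhLog]
    have h1 : (0:ℝ) < 1 - ‖x‖ / s := by linarith
    have h2 : (1:ℝ) ≤ (1 + ‖x‖ / s) / (1 - ‖x‖ / s) := by
      rw [le_div_iff₀ h1]; linarith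
    have := Real.log_nonneg h2
    positivity
  have hc : 0 ≤ c := by rw [hc_def]; positivity
  have hca : (0:ℝ) ≤ c * ‖u‖ := by positivity
  have hcb : (0:ℝ) ≤ c * ‖v‖ := by positivity
  -- tanh bounds
  have tanh_nn : ∀ t : ℝ, 0 ≤ t → 0 ≤ Real.tanh t := by
    intro t ht
    rw [Real.tanh_eq_sinh_div_cosh]
    exact div_nonneg (Real.sinh_nonneg_iff.2 ht) (Real.cosh_pos _).le
  have tanh_le_one : ∀ t : ℝ, Real.tanh t ≤ 1 := by
    intro t
    rw [Real.tanh_eq_sinh_div_cosh, div_le_one (Real.cosh_pos _)]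
    nlinarith [Real.cosh_sub_sinh t, Real.exp_pos (-t)]
  set T1 := Real.tanh (c * ‖u‖) with hT1
  set T2 := Real.tanh (c * ‖v‖) with hT2
  have hP' : mobiusMat s P x = (s * T1) • ((‖u‖)⁻¹ • u) := mobiusMat_eq' s P x hx0.ne'
  have hQ' : mobiusMat s Q x = (s * T2) • ((‖v‖)⁻¹ • v) := mobiusMat_eq' s Q x hx0.ne'
  have hdiff : mobiusMat s P x - mobiusMat s Q x
      = (s * T1) • ((‖u‖)⁻¹ • u - (‖v‖)⁻¹ • v) + (s * T1 - s * T2) • ((‖v‖)⁻¹ • v) := by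
    rw [hP', hQ', smul_sub, sub_smul]
    abel
  have hnv : ‖(‖v‖)⁻¹ • v‖ = 1 := by
    rw [norm_smul, norm_inv, norm_norm, inv_mul_cancel₀ hb0.ne']
  have hunit : ‖(‖u‖)⁻¹ • u - (‖v‖)⁻¹ • v‖ ≤ L * ‖u - v‖ :=
    unit_sub_le' hPx hQx hPL hQL
  have htanh : |T1 - T2| ≤ L * |‖u‖ - ‖v‖| := tanh_abs_diff' hc hL haL hbL
  have habs : |‖u‖ - ‖v‖| ≤ ‖u - v‖ := abs_norm_sub_norm_le u v
  have hT1nn : 0 ≤ T1 := tanh_nn _ hca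
  have hT1le : T1 ≤ 1 := tanh_le_one _
  have huv : ‖u - v‖ ≤ frobNorm (P - Q) * Cx := by
    rw [hu_def, hv_def, mulVecE_sub']
    calc ‖mulVecE (P - Q) x‖ ≤ frobNorm (P - Q) * ‖x‖ := mulVecE_norm_le' (P - Q) x
      _ ≤ frobNorm (P - Q) * Cx := by
        apply mul_le_mul_of_nonneg_left hxC
        exact Real.sqrt_nonneg _
  have huvnn : 0 ≤ ‖u - v‖ := norm_nonneg _
  have hfnn : 0 ≤ frobNorm (P - Q) := Real.sqrt_nonneg _
  calc ‖mobiusMat s P x - mobiusMat s Q x‖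
      ≤ ‖(s * T1) • ((‖u‖)⁻¹ • u - (‖v‖)⁻¹ • v)‖ + ‖(s * T1 - s * T2) • ((‖v‖)⁻¹ • v)‖ := by
        rw [hdiff]; exact norm_add_le _ _
    _ = |s * T1| * ‖(‖u‖)⁻¹ • u - (‖v‖)⁻¹ • v‖ + |s * T1 - s * T2| * 1 := by
        rw [norm_smul, norm_smul, hnv, Real.norm_eq_abs, Real.norm_eq_abs]
    _ ≤ s * (L * ‖u - v‖) + s * (L * ‖u - v‖) := by
        have e1 : |s * T1| ≤ s := by
          rw [abs_of_nonneg (mul_nonneg hs.le hT1nn)]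
          have := mul_le_mul_of_nonneg_left hT1le hs.le
          simpa using this
        have e2 : |s * T1 - s * T2| ≤ s * (L * ‖u - v‖) := by
          have : s * T1 - s * T2 = s * (T1 - T2) := by ring
          rw [this, abs_mul, abs_of_pos hs]
          have h3 : |T1 - T2| ≤ L * ‖u - v‖ := by
            calc |T1 - T2| ≤ L * |‖u‖ - ‖v‖| := htanh
              _ ≤ L * ‖u - v‖ := by
                exact mul_le_mul_of_nonneg_left habs hL.le
          exact mul_le_mul_of_nonneg_left h3 hs.le
        have e3 : |s * T1| * ‖(‖u‖)⁻¹ • u - (‖v‖)⁻¹ • v‖ ≤ s * (L * ‖u - v‖) :=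
          mul_le_mul e1 hunit (norm_nonneg _) hs.le
        linarith
    _ ≤ 2 * s * L * Cx * frobNorm (P - Q) := by
        have h9 : s * L * ‖u - v‖ ≤ s * L * (frobNorm (P - Q) * Cx) :=
          mul_le_mul_of_nonneg_left huv (by positivity)
        nlinarith [h9]
end

section
/- Let s > 0, K_y ≥ 0, t ∈ [0, 1], let P and Q be real d×d matrices, and let x, v ∈ B_s^d with x ≠ 0, d_s(0, v) ≤ K_y, Px ≠ 0, Qx ≠ 0 and (tP + (1−t)Q)x ≠ 0. Then d_s(v, (tP + (1−t)Q)^{⊗_s} x) ≤ t·d_s(v, P^{⊗_s} x) + (1−t)·d_s(v, Q^{⊗_s} x) + 2K_y. -/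
open Real MeasureTheory

lemma gamma_eq_cosh (u : ℝ) (hu0 : 0 ≤ u) (hu1 : u < 1) :
    Real.cosh (Real.arsinh (1 / Real.sqrt (1 - u ^ 2) * u)) = 1 / Real.sqrt (1 - u ^ 2) := by
  have h1 : 0 < 1 - u ^ 2 := by nlinarith
  rw [Real.cosh_arsinh, div_mul_eq_mul_div, one_mul, div_pow, Real.sq_sqrt h1.le,
    show 1 + u ^ 2 / (1 - u ^ 2) = ((1 - u ^ 2))⁻¹ by field_simp; ring,
    Real.sqrt_inv, one_div]

lemma artanh_nonneg {u : ℝ} (hu0 : 0 ≤ u) (hu1 : u < 1) : 0 ≤ Real.artanhLog u := by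
  have : (1 : ℝ) ≤ (1 + u) / (1 - u) := by
    rw [le_div_iff₀ (by linarith)]; linarith
  have := Real.log_nonneg this
  unfold Real.artanhLog; linarith

lemma dPoin_zero {d : ℕ} (s : ℝ) (w : EuclideanSpace ℝ (Fin d)) :
    dPoin s 0 w = 2 * s * Real.arsinh (lorentzGamma s w * ‖w‖ / s) := by
  have : lorentzGamma s (0 : EuclideanSpace ℝ (Fin d)) = 1 := by
    simp [lorentzGamma]
  rw [dPoin, this, one_mul, zero_sub, norm_neg]

lemma gamma_nonneg {d : ℕ} (s : ℝ) (w : EuclideanSpace ℝ (Fin d)) :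
    0 ≤ lorentzGamma s w := by
  unfold lorentzGamma; positivity

lemma gamma_cosh {d : ℕ} {s : ℝ} (hs : 0 < s) (w : EuclideanSpace ℝ (Fin d)) (hw : ‖w‖ < s) :
    Real.cosh (Real.arsinh (lorentzGamma s w * ‖w‖ / s)) = lorentzGamma s w := by
  have h := gamma_eq_cosh (‖w‖ / s) (by positivity) ((div_lt_one hs).2 hw)
  have e : lorentzGamma s w = 1 / Real.sqrt (1 - (‖w‖ / s) ^ 2) := by
    rw [lorentzGamma, div_pow]
  rw [e, show 1 / Real.sqrt (1 - (‖w‖ / s) ^ 2) * ‖w‖ / s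
      = 1 / Real.sqrt (1 - (‖w‖ / s) ^ 2) * (‖w‖ / s) by ring]
  exact h

lemma tri_zero {d : ℕ} {s : ℝ} (hs : 0 < s) (v w : EuclideanSpace ℝ (Fin d))
    (hv : ‖v‖ < s) (hw : ‖w‖ < s) :
    dPoin s v w ≤ dPoin s 0 v + dPoin s 0 w := by
  set α := Real.arsinh (lorentzGamma s v * ‖v‖ / s) with hα
  set β := Real.arsinh (lorentzGamma s w * ‖w‖ / s) with hβ
  rw [dPoin_zero, dPoin_zero, ← hα, ← hβ, dPoin, ← mul_add]
  have key : Real.arsinh (lorentzGamma s v * lorentzGamma s w * ‖v - w‖ / s) ≤ α + β := by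
    rw [← Real.arsinh_sinh (α + β), Real.arsinh_le_arsinh, Real.sinh_add,
      Real.sinh_arsinh, Real.sinh_arsinh, gamma_cosh hs v hv, gamma_cosh hs w hw]
    have hgv := gamma_nonneg s v
    have hgw := gamma_nonneg s w
    have h := norm_sub_le v w
    rw [show lorentzGamma s v * ‖v‖ / s * lorentzGamma s w +
        lorentzGamma s v * (lorentzGamma s w * ‖w‖ / s)
      = lorentzGamma s v * lorentzGamma s w * (‖v‖ + ‖w‖) / s by ring]
    rw [div_le_div_iff_of_pos_right hs]
    exact mul_le_mul_of_nonneg_left h (mul_nonneg hgv hgw)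
  nlinarith [hs]

lemma rev_zero {d : ℕ} {s : ℝ} (hs : 0 < s) (v w : EuclideanSpace ℝ (Fin d))
    (hv : ‖v‖ < s) (hw : ‖w‖ < s) :
    dPoin s 0 w ≤ dPoin s 0 v + dPoin s v w := by
  set α := Real.arsinh (lorentzGamma s v * ‖v‖ / s) with hα
  set β := Real.arsinh (lorentzGamma s w * ‖w‖ / s) with hβ
  rw [dPoin_zero, dPoin_zero, ← hα, ← hβ, dPoin]
  have key : β - α ≤ Real.arsinh (lorentzGamma s v * lorentzGamma s w * ‖v - w‖ / s) := by
    rw [← Real.arsinh_sinh (β - α), Real.arsinh_le_arsinh, Real.sinh_sub,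
      Real.sinh_arsinh, Real.sinh_arsinh, gamma_cosh hs v hv, gamma_cosh hs w hw]
    have hgv := gamma_nonneg s v
    have hgw := gamma_nonneg s w
    have h : ‖w‖ - ‖v‖ ≤ ‖v - w‖ := by
      have := norm_sub_norm_le w v
      rw [norm_sub_rev w v] at this
      linarith [le_abs_self (‖w‖ - ‖v‖), abs_norm_sub_norm_le w v]
    rw [show lorentzGamma s w * ‖w‖ / s * lorentzGamma s v -
        lorentzGamma s w * (lorentzGamma s v * ‖v‖ / s)
      = lorentzGamma s v * lorentzGamma s w * (‖w‖ - ‖v‖) / s by ring]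
    rw [div_le_div_iff_of_pos_right hs]
    exact mul_le_mul_of_nonneg_left h (mul_nonneg hgv hgw)
  nlinarith [hs]

lemma mulVecE_convex {d : ℕ} (t : ℝ) (P Q : Matrix (Fin d) (Fin d) ℝ)
    (x : EuclideanSpace ℝ (Fin d)) :
    mulVecE (t • P + (1 - t) • Q) x = t • mulVecE P x + (1 - t) • mulVecE Q x := by
  simp [mulVecE, Matrix.add_mulVec, Matrix.smul_mulVec, map_add, _root_.map_smul]

lemma norm_mobiusMat {d : ℕ} {s : ℝ} (hs : 0 < s) (M : Matrix (Fin d) (Fin d) ℝ)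
    {x : EuclideanSpace ℝ (Fin d)} (hx0 : x ≠ 0) (hxb : ‖x‖ < s)
    (hMx : mulVecE M x ≠ 0) :
    ‖mobiusMat s M x‖ =
      s * Real.tanh ((‖mulVecE M x‖ / ‖x‖) * Real.artanhLog (‖x‖ / s)) := by
  have hM : (0:ℝ) < ‖mulVecE M x‖ := norm_pos_iff.2 hMx
  have hxn : (0:ℝ) < ‖x‖ := norm_pos_iff.2 hx0
  have hc : 0 ≤ (‖mulVecE M x‖ / ‖x‖) * Real.artanhLog (‖x‖ / s) := by
    have := artanh_nonneg (u := ‖x‖ / s) (by positivity) ((div_lt_one hs).2 hxb)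
    positivity
  have htanh : 0 ≤ Real.tanh ((‖mulVecE M x‖ / ‖x‖) * Real.artanhLog (‖x‖ / s)) := by
    rw [Real.tanh_eq_sinh_div_cosh]
    exact div_nonneg (Real.sinh_nonneg_iff.2 hc) (Real.cosh_pos _).le
  rw [mobiusMat, norm_smul, Real.norm_eq_abs,
    abs_of_nonneg (by positivity), div_mul_cancel₀ _ hM.ne']

lemma dPoin_zero_mobius {d : ℕ} {s : ℝ} (hs : 0 < s) (M : Matrix (Fin d) (Fin d) ℝ)
    {x : EuclideanSpace ℝ (Fin d)} (hx0 : x ≠ 0) (hxb : ‖x‖ < s)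
    (hMx : mulVecE M x ≠ 0) :
    dPoin s 0 (mobiusMat s M x) =
      2 * s * ((‖mulVecE M x‖ / ‖x‖) * Real.artanhLog (‖x‖ / s)) := by
  set c := (‖mulVecE M x‖ / ‖x‖) * Real.artanhLog (‖x‖ / s) with hcdef
  have hn := norm_mobiusMat hs M hx0 hxb hMx
  rw [dPoin_zero, hn]
  have hγ : lorentzGamma s (mobiusMat s M x) = Real.cosh c := by
    rw [lorentzGamma, hn]
    have h1 : (s * Real.tanh c) ^ 2 / s ^ 2 = Real.tanh c ^ 2 := by
      field_simp
    rw [h1, show 1 - Real.tanh c ^ 2 = (Real.cosh c ^ 2)⁻¹ by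
      rw [Real.tanh_eq_sinh_div_cosh, div_pow]
      have hc2 : (0:ℝ) < Real.cosh c ^ 2 := by positivity
      have hid := Real.cosh_sq_sub_sinh_sq c
      field_simp
      linarith
      ]
    rw [Real.sqrt_inv, Real.sqrt_sq (Real.cosh_pos c).le, one_div, inv_inv]
  rw [hγ, show Real.cosh c * (s * Real.tanh c) / s = Real.cosh c * Real.tanh c by
      field_simp,
    Real.tanh_eq_sinh_div_cosh, mul_div_cancel₀ _ (Real.cosh_pos c).ne',
    Real.arsinh_sinh]

/-- Majorizer of the hyperbolic distance for convex combinations of matrices. -/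
theorem stmt9 {d : ℕ} (s Ky t : ℝ) (hs : 0 < s) (hKy : 0 ≤ Ky) (ht0 : 0 ≤ t) (ht1 : t ≤ 1)
    (P Q : Matrix (Fin d) (Fin d) ℝ) (x v : EuclideanSpace ℝ (Fin d))
    (hx0 : x ≠ 0) (hxball : ‖x‖ < s) (hvball : ‖v‖ < s) (hvKy : dPoin s 0 v ≤ Ky)
    (hPx : mulVecE P x ≠ 0) (hQx : mulVecE Q x ≠ 0)
    (hRx : mulVecE (t • P + (1 - t) • Q) x ≠ 0) :
    dPoin s v (mobiusMat s (t • P + (1 - t) • Q) x) ≤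
      t * dPoin s v (mobiusMat s P x) + (1 - t) * dPoin s v (mobiusMat s Q x) + 2 * Ky := by

  set A := Real.artanhLog (‖x‖ / s) with hA
  have hxn : (0:ℝ) < ‖x‖ := norm_pos_iff.2 hx0
  have hA0 : 0 ≤ A := artanh_nonneg (by positivity) ((div_lt_one hs).2 hxball)
  have hlt : ∀ M : Matrix (Fin d) (Fin d) ℝ, mulVecE M x ≠ 0 → ‖mobiusMat s M x‖ < s := by
    intro M hMx
    rw [norm_mobiusMat hs M hx0 hxball hMx]
    have h1 : Real.tanh ((‖mulVecE M x‖ / ‖x‖) * Real.artanhLog (‖x‖ / s)) < 1 := by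
      rw [Real.tanh_eq_sinh_div_cosh, div_lt_one (Real.cosh_pos _)]
      nlinarith [Real.cosh_sub_sinh ((‖mulVecE M x‖ / ‖x‖) * Real.artanhLog (‖x‖ / s)),
        Real.exp_pos (-((‖mulVecE M x‖ / ‖x‖) * Real.artanhLog (‖x‖ / s)))]
    nlinarith
  have h1 := tri_zero hs v (mobiusMat s (t • P + (1 - t) • Q) x) hvball (hlt _ hRx)
  have hnormR : ‖mulVecE (t • P + (1 - t) • Q) x‖ ≤
      t * ‖mulVecE P x‖ + (1 - t) * ‖mulVecE Q x‖ := by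
    rw [mulVecE_convex]
    refine (norm_add_le _ _).trans ?_
    rw [norm_smul, norm_smul, Real.norm_eq_abs, Real.norm_eq_abs,
      abs_of_nonneg ht0, abs_of_nonneg (by linarith : (0:ℝ) ≤ 1 - t)]
  have h3 : dPoin s 0 (mobiusMat s (t • P + (1 - t) • Q) x) ≤
      t * dPoin s 0 (mobiusMat s P x) + (1 - t) * dPoin s 0 (mobiusMat s Q x) := by
    rw [dPoin_zero_mobius hs _ hx0 hxball hRx, dPoin_zero_mobius hs _ hx0 hxball hPx,
      dPoin_zero_mobius hs _ hx0 hxball hQx, ← hA]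
    have key := mul_le_mul_of_nonneg_left hnormR
      (show (0:ℝ) ≤ 2 * s * A / ‖x‖ by positivity)
    calc 2 * s * (‖mulVecE (t • P + (1 - t) • Q) x‖ / ‖x‖ * A)
        = 2 * s * A / ‖x‖ * ‖mulVecE (t • P + (1 - t) • Q) x‖ := by ring
      _ ≤ 2 * s * A / ‖x‖ * (t * ‖mulVecE P x‖ + (1 - t) * ‖mulVecE Q x‖) := key
      _ = t * (2 * s * (‖mulVecE P x‖ / ‖x‖ * A)) +
          (1 - t) * (2 * s * (‖mulVecE Q x‖ / ‖x‖ * A)) := by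
          field_simp
  have h4 := rev_zero hs v (mobiusMat s P x) hvball (hlt _ hPx)
  have h5 := rev_zero hs v (mobiusMat s Q x) hvball (hlt _ hQx)
  have h4' := mul_le_mul_of_nonneg_left h4 ht0
  have h5' := mul_le_mul_of_nonneg_left h5 (by linarith : (0:ℝ) ≤ 1 - t)
  nlinarith [h1, h3, h4', h5', hvKy, ht0, ht1]
end

section
/- Let x, y ∈ ℝ^d be fixed. Then the Poincaré distance d_s(x, y) = 2s·artanh(‖(−x) ⊕_s y‖/s) tends to 2‖x − y‖ as s → ∞ (the expression being defined for all s > max(‖x‖, ‖y‖)). -/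
open Real MeasureTheory

open Filter

lemma artanh_bounds {u : ℝ} (h0 : 0 ≤ u) (h1 : u < 1) :
    u / (1 + u) ≤ Real.artanhLog u ∧ Real.artanhLog u ≤ u / (1 - u) := by
  have h1u : 0 < 1 - u := by linarith
  have h2u : 0 < 1 + u := by linarith
  have hA := Real.log_le_sub_one_of_pos (div_pos h2u h1u)
  have hB := Real.log_le_sub_one_of_pos (div_pos h1u h2u)
  have hlog : Real.log ((1 - u) / (1 + u)) = - Real.log ((1 + u) / (1 - u)) := by
    rw [← Real.log_inv]; congr 1; field_simp
  rw [hlog] at hB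
  have e1 : (1 + u) / (1 - u) - 1 = 2 * u / (1 - u) := by field_simp; ring
  have e2 : (1 - u) / (1 + u) - 1 = -(2 * u / (1 + u)) := by field_simp; ring
  rw [e1] at hA; rw [e2] at hB
  unfold Real.artanhLog
  constructor
  · have : u / (1 + u) = (1/2) * (2 * u / (1 + u)) := by ring
    rw [this]; linarith
  · have : u / (1 - u) = (1/2) * (2 * u / (1 - u)) := by ring
    rw [this]; linarith

lemma artanh_sandwich {s n : ℝ} (h0 : 0 ≤ n) (hns : n < s) (hs : 0 < s) :
    2 * n / (1 + n / s) ≤ 2 * s * Real.artanhLog (n / s) ∧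
      2 * s * Real.artanhLog (n / s) ≤ 2 * n / (1 - n / s) := by
  have hu0 : 0 ≤ n / s := div_nonneg h0 hs.le
  have hu1 : n / s < 1 := (div_lt_one hs).2 hns
  obtain ⟨hlo, hhi⟩ := artanh_bounds hu0 hu1
  have hsn : s * (n / s) = n := by field_simp
  have h1p : 0 < 1 + n / s := by linarith
  have h1m : 0 < 1 - n / s := by linarith
  rw [div_le_iff₀ h1p] at hlo
  rw [le_div_iff₀ h1m] at hhi
  constructor
  · rw [div_le_iff₀ h1p]
    nlinarith [hlo, hs, hsn]
  · rw [le_div_iff₀ h1m]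
    nlinarith [hhi, hs, hsn]


/-- `d_s(x, y) → 2‖x − y‖` as `s → ∞`. -/
theorem stmt15 {d : ℕ} (x y : EuclideanSpace ℝ (Fin d)) :
    Filter.Tendsto (fun s : ℝ => 2 * s * Real.artanhLog (‖mobiusAdd s (-x) y‖ / s))
      Filter.atTop (nhds (2 * ‖x - y‖)) := by
  set n : ℝ → ℝ := fun s => ‖mobiusAdd s (-x) y‖ with hndef
  set c : ℝ := ‖x - y‖ with hcdef
  have hc0 : 0 ≤ c := norm_nonneg _
  -- 1/s^2 → 0, 1/s^4 → 0
  have h2 : Tendsto (fun s : ℝ => 1 / s ^ 2) atTop (nhds 0) := by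
    have h : Tendsto (fun s : ℝ => s ^ 2) atTop atTop := tendsto_pow_atTop (by norm_num)
    simp only [one_div]; exact h.inv_tendsto_atTop
  have h4 : Tendsto (fun s : ℝ => 1 / s ^ 4) atTop (nhds 0) := by
    have h : Tendsto (fun s : ℝ => s ^ 4) atTop atTop := tendsto_pow_atTop (by norm_num)
    simp only [one_div]; exact h.inv_tendsto_atTop
  set r : ℝ := (inner ℝ (-x) y : ℝ) with hrdef
  have hden : Tendsto (fun s : ℝ =>
      1 + 2 / s ^ 2 * r + 1 / s ^ 4 * ‖(-x : EuclideanSpace ℝ (Fin d))‖ ^ 2 * ‖y‖ ^ 2)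
      atTop (nhds 1) := by
    have e : (fun s : ℝ => 1 + 2 / s ^ 2 * r + 1 / s ^ 4 * ‖(-x : EuclideanSpace ℝ (Fin d))‖ ^ 2 * ‖y‖ ^ 2)
        = fun s => 1 + (2 * r) * (1 / s ^ 2) + (‖(-x : EuclideanSpace ℝ (Fin d))‖ ^ 2 * ‖y‖ ^ 2) * (1 / s ^ 4) := by
      funext s; ring
    rw [e]
    have := (tendsto_const_nhds (x := (1:ℝ)) (f := atTop)).add
      ((h2.const_mul (2 * r)).add (h4.const_mul (‖(-x : EuclideanSpace ℝ (Fin d))‖ ^ 2 * ‖y‖ ^ 2))) 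
    simpa [add_assoc] using this
  have hnum1 : Tendsto (fun s : ℝ => 1 + 2 / s ^ 2 * r + 1 / s ^ 2 * ‖y‖ ^ 2)
      atTop (nhds 1) := by
    have e : (fun s : ℝ => 1 + 2 / s ^ 2 * r + 1 / s ^ 2 * ‖y‖ ^ 2)
        = fun s => 1 + (2 * r + ‖y‖ ^ 2) * (1 / s ^ 2) := by funext s; ring
    rw [e]
    simpa using (tendsto_const_nhds (x := (1:ℝ)) (f := atTop)).add
      (h2.const_mul (2 * r + ‖y‖ ^ 2))
  have hnum2 : Tendsto (fun s : ℝ =>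
      1 - 1 / s ^ 2 * ‖(-x : EuclideanSpace ℝ (Fin d))‖ ^ 2) atTop (nhds 1) := by
    have e : (fun s : ℝ => 1 - 1 / s ^ 2 * ‖(-x : EuclideanSpace ℝ (Fin d))‖ ^ 2)
        = fun s => 1 - (‖(-x : EuclideanSpace ℝ (Fin d))‖ ^ 2) * (1 / s ^ 2) := by funext s; ring
    rw [e]
    simpa using (tendsto_const_nhds (x := (1:ℝ)) (f := atTop)).sub
      (h2.const_mul (‖(-x : EuclideanSpace ℝ (Fin d))‖ ^ 2))
  have hvec : Tendsto (fun s : ℝ => mobiusAdd s (-x) y) atTop (nhds (-x + y)) := by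
    have h1 := ((hnum1.div hden one_ne_zero).smul
      (tendsto_const_nhds (x := (-x : EuclideanSpace ℝ (Fin d))) (f := atTop)))
    have h2' := ((hnum2.div hden one_ne_zero).smul
      (tendsto_const_nhds (x := (y : EuclideanSpace ℝ (Fin d))) (f := atTop)))
    have := h1.add h2'
    simp only [div_one, one_smul] at this
    convert this using 1
    rfl
  have hn : Tendsto n atTop (nhds c) := by
    have := hvec.norm
    have e : ‖(-x + y : EuclideanSpace ℝ (Fin d))‖ = c := by
      rw [hcdef, ← norm_neg]; congr 1; abel
    rwa [e] at this
  -- n s / s → 0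
  have hds : Tendsto (fun s : ℝ => n s / s) atTop (nhds 0) := by
    have := hn.mul tendsto_inv_atTop_zero
    simpa [div_eq_mul_inv] using this
  have hL : Tendsto (fun s : ℝ => 2 * n s / (1 + n s / s)) atTop (nhds (2 * c)) := by
    have := (hn.const_mul 2).div ((tendsto_const_nhds (x := (1:ℝ)) (f := atTop)).add hds)
      (by norm_num)
    simpa [Pi.div_def] using this
  have hU : Tendsto (fun s : ℝ => 2 * n s / (1 - n s / s)) atTop (nhds (2 * c)) := by
    have := (hn.const_mul 2).div ((tendsto_const_nhds (x := (1:ℝ)) (f := atTop)).sub hds)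
      (by norm_num)
    simpa [Pi.div_def] using this
  have hev : ∀ᶠ s : ℝ in atTop, 0 ≤ n s ∧ n s < s ∧ 0 < s := by
    filter_upwards [hn.eventually_lt_const (lt_add_one c), eventually_gt_atTop (c + 1)]
      with s h1 h2
    exact ⟨norm_nonneg _, by linarith, by linarith⟩
  apply tendsto_of_tendsto_of_tendsto_of_le_of_le' hL hU
  · filter_upwards [hev] with s ⟨h0, h1, h2⟩
    exact (artanh_sandwich h0 h1 h2).1
  · filter_upwards [hev] with s ⟨h0, h1, h2⟩
    exact (artanh_sandwich h0 h1 h2).2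
end

section
/- Let μ1, μ2, x ∈ ℝ^d with x ≠ μ1, and let T be a real d×d matrix with T(x − μ1) ≠ 0. Then the wrapped linear map μ2 ⊕_s T^{⊗_s}((−μ1) ⊕_s x) tends to μ2 + T(x − μ1) as s → ∞ (the expression being defined for all sufficiently large s). -/
open Real MeasureTheory

open Filter


lemma artanh_zero' : Real.artanhLog 0 = 0 := by simp [Real.artanhLog]

lemma hasDerivAt_artanh_zero : HasDerivAt Real.artanhLog 1 0 := by
  have ha : HasDerivAt (fun x : ℝ => 1 + x) 1 0 := (hasDerivAt_id 0).const_add 1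
  have hb : HasDerivAt (fun x : ℝ => 1 - x) (-1) 0 := (hasDerivAt_id 0).const_sub 1
  have h1 : HasDerivAt (fun x : ℝ => (1 + x) / (1 - x)) 2 0 := by
    have := ha.fun_div hb (by norm_num)
    exact this.congr_deriv (by norm_num)
  have h2 := (h1.log (by norm_num)).const_mul (1/2 : ℝ)
  have h3 : HasDerivAt Real.artanhLog (1/2 * (2 / ((1+(0:ℝ))/(1-0)))) 0 := h2
  convert h3 using 1
  norm_num

lemma hasDerivAt_tanh_zero : HasDerivAt Real.tanh 1 0 := by
  have h : HasDerivAt (fun x : ℝ => Real.sinh x / Real.cosh x)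
      ((Real.cosh 0 * Real.cosh 0 - Real.sinh 0 * Real.sinh 0) / Real.cosh 0 ^ 2) 0 :=
    (Real.hasDerivAt_sinh 0).div (Real.hasDerivAt_cosh 0) (Real.cosh_pos 0).ne'
  have he : Real.tanh = fun x : ℝ => Real.sinh x / Real.cosh x := by
    funext x; exact Real.tanh_eq_sinh_div_cosh x
  rw [he]
  convert h using 1
  simp

lemma tendsto_tanh_div : Tendsto (fun t : ℝ => Real.tanh t / t) (nhdsWithin 0 {0}ᶜ) (nhds 1) := by
  have h := hasDerivAt_iff_tendsto_slope.mp hasDerivAt_tanh_zero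
  refine h.congr' ?_
  filter_upwards [self_mem_nhdsWithin] with t ht
  simp [slope_fun_def, div_eq_inv_mul]

lemma tendsto_artanh_div :
    Tendsto (fun t : ℝ => Real.artanhLog t / t) (nhdsWithin 0 {0}ᶜ) (nhds 1) := by
  have h := hasDerivAt_iff_tendsto_slope.mp hasDerivAt_artanh_zero
  refine h.congr' ?_
  filter_upwards [self_mem_nhdsWithin] with t ht
  simp [slope_fun_def, artanh_zero', div_eq_inv_mul]

lemma continuous_mulVecE {d d' : ℕ} (T : Matrix (Fin d') (Fin d) ℝ) :
    Continuous (mulVecE T) := by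
  have he : mulVecE T = fun x =>
      (EuclideanSpace.equiv (Fin d') ℝ).symm (T.mulVecLin (EuclideanSpace.equiv (Fin d) ℝ x)) := by
    funext x; simp [mulVecE, Matrix.mulVecLin_apply]
  rw [he]
  exact ((EuclideanSpace.equiv (Fin d') ℝ).symm.continuous).comp
    ((T.mulVecLin.continuous_of_finiteDimensional).comp (EuclideanSpace.equiv (Fin d) ℝ).continuous)

lemma my_tendsto_mobiusAdd {d : ℕ} (a : EuclideanSpace ℝ (Fin d))
    {f : ℝ → EuclideanSpace ℝ (Fin d)} {L : EuclideanSpace ℝ (Fin d)}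
    (hf : Tendsto f atTop (nhds L)) :
    Tendsto (fun s => mobiusAdd s a (f s)) atTop (nhds (a + L)) := by
  have h2 : Tendsto (fun s : ℝ => 2 / s ^ 2) atTop (nhds 0) :=
    tendsto_const_nhds.div_atTop (tendsto_pow_atTop two_ne_zero)
  have h1 : Tendsto (fun s : ℝ => 1 / s ^ 2) atTop (nhds 0) :=
    tendsto_const_nhds.div_atTop (tendsto_pow_atTop two_ne_zero)
  have h4 : Tendsto (fun s : ℝ => 1 / s ^ 4) atTop (nhds 0) :=
    tendsto_const_nhds.div_atTop (tendsto_pow_atTop four_ne_zero)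
  have hin : Tendsto (fun s => (inner ℝ a (f s) : ℝ)) atTop (nhds (inner ℝ a L)) :=
    tendsto_const_nhds.inner hf
  have hnf : Tendsto (fun s => ‖f s‖ ^ 2) atTop (nhds (‖L‖ ^ 2)) := (hf.norm).pow 2
  have hconst1 : Tendsto (fun _ : ℝ => (1:ℝ)) atTop (nhds 1) := tendsto_const_nhds
  have hconstA : Tendsto (fun _ : ℝ => ‖a‖ ^ 2) atTop (nhds (‖a‖ ^ 2)) := tendsto_const_nhds
  have hden : Tendsto (fun s : ℝ =>
      1 + 2 / s ^ 2 * (inner ℝ a (f s) : ℝ) + 1 / s ^ 4 * ‖a‖ ^ 2 * ‖f s‖ ^ 2) atTop (nhds 1) := by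
    have := (hconst1.add ((h2.mul hin))).add (((h4.mul hconstA).mul hnf))
    simpa using this
  have hnum1 : Tendsto (fun s : ℝ =>
      1 + 2 / s ^ 2 * (inner ℝ a (f s) : ℝ) + 1 / s ^ 2 * ‖f s‖ ^ 2) atTop (nhds 1) := by
    have := (hconst1.add ((h2.mul hin))).add ((h1.mul hnf))
    simpa using this
  have hnum2 : Tendsto (fun s : ℝ => 1 - 1 / s ^ 2 * ‖a‖ ^ 2) atTop (nhds 1) := by
    have := hconst1.sub (h1.mul hconstA)
    simpa using this
  have hc1 := (hnum1.div hden one_ne_zero)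
  have hc2 := (hnum2.div hden one_ne_zero)
  have := (hc1.smul (tendsto_const_nhds : Tendsto (fun _ : ℝ => a) atTop _)).add (hc2.smul hf)
  simpa [mobiusAdd] using this

lemma my_tendsto_mobiusMat {d : ℕ} (T : Matrix (Fin d) (Fin d) ℝ)
    {f : ℝ → EuclideanSpace ℝ (Fin d)} {L : EuclideanSpace ℝ (Fin d)}
    (hf : Tendsto f atTop (nhds L)) (hL : L ≠ 0) (hTL : mulVecE T L ≠ 0) :
    Tendsto (fun s => mobiusMat s T (f s)) atTop (nhds (mulVecE T L)) := by
  set g := fun s => mulVecE T (f s) with hgdef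
  have hg : Tendsto g atTop (nhds (mulVecE T L)) := ((continuous_mulVecE T).tendsto L).comp hf
  have hnf : Tendsto (fun s => ‖f s‖) atTop (nhds ‖L‖) := hf.norm
  have hng : Tendsto (fun s => ‖g s‖) atTop (nhds ‖mulVecE T L‖) := hg.norm
  have hLpos : (0:ℝ) < ‖L‖ := norm_pos_iff.mpr hL
  have hTLpos : (0:ℝ) < ‖mulVecE T L‖ := norm_pos_iff.mpr hTL
  have hEf : ∀ᶠ s in atTop, 0 < ‖f s‖ := hnf.eventually (lt_mem_nhds hLpos)
  have hEg : ∀ᶠ s in atTop, 0 < ‖g s‖ := hng.eventually (lt_mem_nhds hTLpos)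
  have hspos : ∀ᶠ s : ℝ in atTop, 0 < s := eventually_gt_atTop 0
  have hu : Tendsto (fun s => ‖f s‖ / s) atTop (nhds 0) := hnf.div_atTop tendsto_id
  have hu1 : ∀ᶠ s in atTop, ‖f s‖ / s < 1 := hu.eventually (gt_mem_nhds one_pos)
  have hupos : ∀ᶠ s in atTop, 0 < ‖f s‖ / s := by
    filter_upwards [hEf, hspos] with s h1 h2; exact div_pos h1 h2
  have hau0 : Tendsto (fun s => Real.artanhLog (‖f s‖ / s)) atTop (nhds 0) := by
    have hc : ContinuousAt Real.artanhLog 0 :=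
      hasDerivAt_artanh_zero.differentiableAt.continuousAt
    have := hc.tendsto.comp hu
    simpa [artanh_zero', Function.comp_def] using this
  have hartanhpos : ∀ᶠ s in atTop, 0 < Real.artanhLog (‖f s‖ / s) := by
    filter_upwards [hupos, hu1] with s h1 h2
    have hlt : 1 < (1 + ‖f s‖ / s) / (1 - ‖f s‖ / s) := by
      rw [lt_div_iff₀ (by linarith)]; linarith
    exact mul_pos (by norm_num) (Real.log_pos hlt)
  have hc : Tendsto (fun s => ‖g s‖ / ‖f s‖) atTop (nhds (‖mulVecE T L‖ / ‖L‖)) :=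
    hng.div hnf hLpos.ne'
  have hA0 : Tendsto (fun s => (‖g s‖ / ‖f s‖) * Real.artanhLog (‖f s‖ / s)) atTop (nhds 0) := by
    simpa using hc.mul hau0
  have hApos : ∀ᶠ s in atTop, 0 < (‖g s‖ / ‖f s‖) * Real.artanhLog (‖f s‖ / s) := by
    filter_upwards [hEf, hEg, hartanhpos] with s h1 h2 h3
    exact mul_pos (div_pos h2 h1) h3
  have hAne : Tendsto (fun s => (‖g s‖ / ‖f s‖) * Real.artanhLog (‖f s‖ / s)) atTop
      (nhdsWithin 0 {0}ᶜ) := by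
    refine tendsto_nhdsWithin_iff.mpr ⟨hA0, ?_⟩
    filter_upwards [hApos] with s h; exact h.ne'
  have hune : Tendsto (fun s => ‖f s‖ / s) atTop (nhdsWithin 0 {0}ᶜ) := by
    refine tendsto_nhdsWithin_iff.mpr ⟨hu, ?_⟩
    filter_upwards [hupos] with s h; exact h.ne'
  have htt : Tendsto (fun s => Real.tanh ((‖g s‖ / ‖f s‖) * Real.artanhLog (‖f s‖ / s)) /
      ((‖g s‖ / ‖f s‖) * Real.artanhLog (‖f s‖ / s))) atTop (nhds 1) :=
    tendsto_tanh_div.comp hAne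
  have hat : Tendsto (fun s => Real.artanhLog (‖f s‖ / s) / (‖f s‖ / s)) atTop (nhds 1) :=
    tendsto_artanh_div.comp hune
  have hscalar : Tendsto (fun s =>
      s * Real.tanh ((‖g s‖ / ‖f s‖) * Real.artanhLog (‖f s‖ / s)) / ‖g s‖) atTop (nhds 1) := by
    have hprod := htt.mul hat
    refine Tendsto.congr' ?_ (by simpa using hprod)
    filter_upwards [hEf, hEg, hspos, hartanhpos] with s h1 h2 h3 h4
    field_simp
  have hfinal := hscalar.smul hg
  rw [one_smul] at hfinal
  exact hfinal.congr (fun s => by simp [mobiusMat, hgdef])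

/-- The wrapped linear map tends to the Euclidean affine map as `s → ∞`. -/
theorem stmt16 {d : ℕ} (μ1 μ2 x : EuclideanSpace ℝ (Fin d)) (T : Matrix (Fin d) (Fin d) ℝ)
    (hx : x ≠ μ1) (hTx : mulVecE T (x - μ1) ≠ 0) :
    Filter.Tendsto (fun s : ℝ => mobiusAdd s μ2 (mobiusMat s T (mobiusAdd s (-μ1) x)))
      Filter.atTop (nhds (μ2 + mulVecE T (x - μ1))) := by
  have h1 : Tendsto (fun s : ℝ => mobiusAdd s (-μ1) x) atTop (nhds (x - μ1)) := by
    have := my_tendsto_mobiusAdd (-μ1) (f := fun _ : ℝ => x) tendsto_const_nhds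
    simpa [neg_add_eq_sub] using this
  have h2 := my_tendsto_mobiusMat T h1 (sub_ne_zero.mpr hx) hTx
  exact my_tendsto_mobiusAdd μ2 h2
end

section
/- Let s > 0 and let x, y ∈ B_s^d. Then the two expressions for the Poincaré distance agree: 2s·artanh(‖(−x) ⊕_s y‖/s) = 2s·arsinh(γ_x·γ_y·‖x − y‖/s), where γ_x = 1/√(1 − ‖x‖²/s²) and γ_y = 1/√(1 − ‖y‖²/s²). -/
open Real MeasureTheory

lemma artanh_eq_arsinh_aux {t : ℝ} (h0 : 0 ≤ t) (h1 : t < 1) :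
    Real.artanhLog t = Real.arsinh (t / Real.sqrt (1 - t ^ 2)) := by
  have h1t : 0 < 1 - t := by linarith
  have h2 : 0 < 1 - t ^ 2 := by nlinarith
  have hsq : 0 < Real.sqrt (1 - t ^ 2) := Real.sqrt_pos.mpr h2
  rw [Real.arsinh, Real.artanhLog]
  have h3 : 1 + (t / Real.sqrt (1 - t ^ 2)) ^ 2 = (1 - t ^ 2)⁻¹ := by
    rw [div_pow, Real.sq_sqrt h2.le]; field_simp; ring
  rw [h3, Real.sqrt_inv]
  have e1 : t / Real.sqrt (1 - t ^ 2) + (Real.sqrt (1 - t ^ 2))⁻¹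
      = (1 + t) / Real.sqrt (1 - t ^ 2) := by
    field_simp; ring
  rw [e1, Real.log_div (by linarith) (ne_of_gt hsq), Real.log_sqrt h2.le,
    Real.log_div (by linarith) (by linarith),
    show (1 : ℝ) - t ^ 2 = (1 + t) * (1 - t) by ring,
    Real.log_mul (by linarith) (by linarith)]
  ring

lemma norm_combo {d : ℕ} (a b : ℝ) (u w : EuclideanSpace ℝ (Fin d)) :
    ‖a • u + b • w‖ ^ 2
      = a ^ 2 * ‖u‖ ^ 2 + 2 * (a * b) * (inner ℝ u w : ℝ) + b ^ 2 * ‖w‖ ^ 2 := by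
  rw [norm_add_sq_real, real_inner_smul_left, real_inner_smul_right, norm_smul, norm_smul]
  simp only [Real.norm_eq_abs, mul_pow, sq_abs]
  ring

lemma eq_of_sq_eq_sq' {a b : ℝ} (ha : 0 ≤ a) (hb : 0 ≤ b) (h : a ^ 2 = b ^ 2) : a = b := by
  rw [← Real.sqrt_sq ha, ← Real.sqrt_sq hb, h]


set_option maxHeartbeats 1000000 in
/-- The two expressions of the Poincaré distance agree on the ball of radius `s`. -/
theorem stmt18 {d : ℕ} (s : ℝ) (hs : 0 < s) (x y : EuclideanSpace ℝ (Fin d))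
    (hx : ‖x‖ < s) (hy : ‖y‖ < s) :
    2 * s * Real.artanhLog (‖mobiusAdd s (-x) y‖ / s) =
      2 * s * Real.arsinh (lorentzGamma s x * lorentzGamma s y * ‖x - y‖ / s) := by
  have hx0 : 0 ≤ ‖x‖ := norm_nonneg x
  have hy0 : 0 ≤ ‖y‖ := norm_nonneg y
  have hsne : s ≠ 0 := hs.ne'
  have hs2 : (0:ℝ) < s ^ 2 := by positivity
  have hxa : 0 < s ^ 2 - ‖x‖ ^ 2 := by nlinarith
  have hyb : 0 < s ^ 2 - ‖y‖ ^ 2 := by nlinarith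
  have hxane : s ^ 2 - ‖x‖ ^ 2 ≠ 0 := hxa.ne'
  have hybne : s ^ 2 - ‖y‖ ^ 2 ≠ 0 := hyb.ne'
  have hab : ‖x‖ * ‖y‖ < s ^ 2 := by nlinarith
  set p : ℝ := (inner ℝ x y : ℝ) with hp
  have hpabs : |p| ≤ ‖x‖ * ‖y‖ := by rw [hp]; exact abs_real_inner_le_norm x y
  have hple := (abs_le.mp hpabs).2
  set D : ℝ := 1 + 2 / s ^ 2 * (-p) + 1 / s ^ 4 * ‖x‖ ^ 2 * ‖y‖ ^ 2 with hD
  have hD4 : s ^ 4 * D = s ^ 4 - 2 * s ^ 2 * p + ‖x‖ ^ 2 * ‖y‖ ^ 2 := by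
    rw [hD]; field_simp; ring
  have hDpos : 0 < D := by
    have h1 : 0 < s ^ 4 * D := by
      rw [hD4]
      nlinarith [pow_pos (sub_pos.mpr hab) 2, mul_nonneg hs2.le (sub_nonneg.mpr hple)]
    nlinarith [pow_pos hs 4]
  have hDne : D ≠ 0 := hDpos.ne'
  have hm : ‖x - y‖ ^ 2 = ‖x‖ ^ 2 - 2 * p + ‖y‖ ^ 2 := by
    rw [norm_sub_sq_real, hp]
  clear_value D
  have hMA : ‖mobiusAdd s (-x) y‖ ^ 2 = ‖x - y‖ ^ 2 / D := by
    have hrw : mobiusAdd s (-x) y =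
        ((1 + 2 / s ^ 2 * (-p) + 1 / s ^ 2 * ‖y‖ ^ 2) / D) • (-x) +
        ((1 - 1 / s ^ 2 * ‖x‖ ^ 2) / D) • y := by
      rw [mobiusAdd, inner_neg_left, norm_neg, ← hp, ← hD]
    rw [hrw, norm_combo, inner_neg_left, norm_neg, ← hp, hm]
    field_simp
    linear_combination (-(‖x‖ ^ 2 - 2 * p + ‖y‖ ^ 2)) * hD4
  have hkey : s ^ 2 * (s ^ 2 * D - ‖x - y‖ ^ 2) = (s ^ 2 - ‖x‖ ^ 2) * (s ^ 2 - ‖y‖ ^ 2) := by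
    linear_combination hD4 - s ^ 2 * hm
  have hlt : ‖x - y‖ ^ 2 < s ^ 2 * D := by
    nlinarith [hkey, mul_pos hxa hyb, hs2]
  have hM2 : ‖mobiusAdd s (-x) y‖ ^ 2 < s ^ 2 := by
    rw [hMA, div_lt_iff₀ hDpos]
    nlinarith [hlt]
  have htlt : ‖mobiusAdd s (-x) y‖ / s < 1 := by
    rw [div_lt_one hs]
    nlinarith [norm_nonneg (mobiusAdd s (-x) y), hM2]
  have ht2 : (‖mobiusAdd s (-x) y‖ / s) ^ 2 = ‖x - y‖ ^ 2 / (s ^ 2 * D) := by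
    rw [div_pow, hMA, div_div, mul_comm D (s ^ 2)]
  have h1t2 : 0 < 1 - (‖mobiusAdd s (-x) y‖ / s) ^ 2 := by
    rw [ht2, sub_pos, div_lt_one (by positivity)]; exact hlt
  have hx1 : (0:ℝ) ≤ 1 - ‖x‖ ^ 2 / s ^ 2 := by
    rw [sub_nonneg, div_le_one hs2]; nlinarith
  have hy1 : (0:ℝ) ≤ 1 - ‖y‖ ^ 2 / s ^ 2 := by
    rw [sub_nonneg, div_le_one hs2]; nlinarith
  have hgx : lorentzGamma s x ^ 2 = s ^ 2 / (s ^ 2 - ‖x‖ ^ 2) := by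
    rw [lorentzGamma, div_pow, one_pow, Real.sq_sqrt hx1]
    field_simp
  have hgy : lorentzGamma s y ^ 2 = s ^ 2 / (s ^ 2 - ‖y‖ ^ 2) := by
    rw [lorentzGamma, div_pow, one_pow, Real.sq_sqrt hy1]
    field_simp
  have hgx0 : 0 ≤ lorentzGamma s x := by rw [lorentzGamma]; positivity
  have hgy0 : 0 ≤ lorentzGamma s y := by rw [lorentzGamma]; positivity
  have h1mt : 1 - ‖x - y‖ ^ 2 / (s ^ 2 * D)
      = (s ^ 2 - ‖x‖ ^ 2) * (s ^ 2 - ‖y‖ ^ 2) / (s ^ 2 * (s ^ 2 * D)) := by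
    field_simp
    linear_combination hkey
  have hsqL : ((‖mobiusAdd s (-x) y‖ / s) / Real.sqrt (1 - (‖mobiusAdd s (-x) y‖ / s) ^ 2)) ^ 2
      = ‖x - y‖ ^ 2 * s ^ 2 / ((s ^ 2 - ‖x‖ ^ 2) * (s ^ 2 - ‖y‖ ^ 2)) := by
    rw [div_pow, Real.sq_sqrt h1t2.le, ht2, h1mt]
    field_simp
  have hsqR : (lorentzGamma s x * lorentzGamma s y * ‖x - y‖ / s) ^ 2
      = ‖x - y‖ ^ 2 * s ^ 2 / ((s ^ 2 - ‖x‖ ^ 2) * (s ^ 2 - ‖y‖ ^ 2)) := by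
    rw [div_pow, mul_pow, mul_pow, hgx, hgy]
    field_simp
  have harg : (‖mobiusAdd s (-x) y‖ / s) / Real.sqrt (1 - (‖mobiusAdd s (-x) y‖ / s) ^ 2)
      = lorentzGamma s x * lorentzGamma s y * ‖x - y‖ / s := by
    refine eq_of_sq_eq_sq' (by positivity) ?_ (by rw [hsqL, hsqR])
    exact div_nonneg (mul_nonneg (mul_nonneg hgx0 hgy0) (norm_nonneg _)) hs.le
  rw [artanh_eq_arsinh_aux (by positivity) htlt, harg]
end
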